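/- For all real constants δ > 0 and κ > 0, the equation tanh(√(2δ)·x) = δ(2κx − δ)/(κ√(2δ)) has exactly one solution β in the open interval (0, ∞), and this unique solution satisfies β > δ/(2κ). -/

import Mathlib

/-- For all real constants `δ > 0` and `κ > 0`, the equation
`tanh(√(2δ)·x) = δ(2κx − δ)/(κ√(2δ))` has exactly one solution `β` in `(0, ∞)`,
and this unique solution satisfies `β > δ/(2κ)`. -/
theorem statement0 (δ κ : ℝ) (hδ : 0 < δ) (hκ : 0 < κ) :
    (∃! β : ℝ, 0 < β ∧
      Real.tanh (Real.sqrt (2*δ) * β) = δ * (2*κ*β - δ) / (κ * Real.sqrt (2*δ))) ∧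
    (∀ β : ℝ, 0 < β →
      Real.tanh (Real.sqrt (2*δ) * β) = δ * (2*κ*β - δ) / (κ * Real.sqrt (2*δ)) →
      δ / (2*κ) < β) := by
  set s : ℝ := Real.sqrt (2*δ) with hs_def
  have hs : 0 < s := Real.sqrt_pos.mpr (by linarith)
  have hs2 : s * s = 2*δ := Real.mul_self_sqrt (by linarith)
  have hks : κ * s ≠ 0 := by positivity
  -- derivative of tanh
  have htanh : ∀ y : ℝ, HasDerivAt Real.tanh (1 / (Real.cosh y)^2) y := by
    intro y
    have h1 := (Real.hasDerivAt_sinh y).div (Real.hasDerivAt_cosh y)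
      (ne_of_gt (Real.cosh_pos y))
    have hfun : (Real.sinh / Real.cosh) = Real.tanh := by
      funext x; rw [Pi.div_apply, Real.tanh_eq_sinh_div_cosh]
    rw [hfun] at h1
    refine h1.congr_deriv ?_
    have := Real.cosh_sq_sub_sinh_sq y
    congr 1
    nlinarith [Real.cosh_sq_sub_sinh_sq y]
  set F : ℝ → ℝ := fun x => s*x - Real.tanh (s*x) with hF
  have hFd : ∀ x : ℝ, HasDerivAt F (s - (1 / (Real.cosh (s*x))^2) * s) x := by
    intro x
    have h := ((hasDerivAt_id x).const_mul s).sub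
      ((htanh (s*x)).comp x ((hasDerivAt_id x).const_mul s))
    refine (h.congr_deriv (by ring)).congr_of_eventuallyEq (Filter.Eventually.of_forall fun y => ?_)
    simp [hF]
  have hcont : Continuous F := by
    have : Differentiable ℝ F := fun x => (hFd x).differentiableAt
    exact this.continuous
  have hmono : StrictMonoOn F (Set.Ici (0:ℝ)) := by
    apply strictMonoOn_of_deriv_pos (convex_Ici 0) hcont.continuousOn
    intro x hx
    rw [interior_Ici] at hx
    rw [(hFd x).deriv]
    have hx' : (0:ℝ) < x := hx
    have hsx : s * x ≠ 0 := ne_of_gt (mul_pos hs hx')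
    have hc : 1 < Real.cosh (s*x) := Real.one_lt_cosh.mpr hsx
    have hc2 : 1 < (Real.cosh (s*x))^2 := by nlinarith
    have : 1 / (Real.cosh (s*x))^2 < 1 := by
      rw [div_lt_one (by positivity)]; exact hc2
    nlinarith
  have hF0 : F 0 = 0 := by simp [hF, Real.tanh_zero]
  set c : ℝ := δ^2 / (κ * s) with hc_def
  have hc : 0 < c := by positivity
  -- the equation is equivalent to F β = c
  have key : ∀ β : ℝ, (Real.tanh (s * β) = δ * (2*κ*β - δ) / (κ * s)) ↔ F β = c := by
    intro β
    rw [hF, hc_def]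
    simp only
    constructor
    · intro h; field_simp at h ⊢; linear_combination (κ*β)*hs2 - h
    · intro h; field_simp at h ⊢; linear_combination (κ*β)*hs2 - h
  -- existence
  have hb0 : (0:ℝ) < (c+1)/s := by positivity
  have hFb : c < F ((c+1)/s) := by
    have hsb : s * ((c+1)/s) = c + 1 := by field_simp
    have ht : Real.tanh (c+1) < 1 := by
      rw [Real.tanh_eq_sinh_div_cosh, div_lt_one (Real.cosh_pos _)]
      exact Real.sinh_lt_cosh _
    simp only [hF, hsb]
    linarith
  obtain ⟨β₀, hβ₀mem, hβ₀⟩ := intermediate_value_Icc (le_of_lt hb0) hcont.continuousOn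
    (by rw [hF0]; exact ⟨le_of_lt hc, le_of_lt hFb⟩ : c ∈ Set.Icc (F 0) (F ((c+1)/s)))
  have hβ₀pos : 0 < β₀ := by
    rcases lt_or_eq_of_le hβ₀mem.1 with h | h
    · exact h
    · exfalso; rw [← h] at hβ₀; rw [hF0] at hβ₀; linarith
  -- the "greater than δ/(2κ)" part
  have part2 : ∀ β : ℝ, 0 < β →
      Real.tanh (s * β) = δ * (2*κ*β - δ) / (κ * s) → δ / (2*κ) < β := by
    intro β hβ heq
    have htpos : 0 < Real.tanh (s * β) := by
      rw [Real.tanh_eq_sinh_div_cosh]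
      exact div_pos (Real.sinh_pos_iff.mpr (by positivity)) (Real.cosh_pos _)
    rw [heq] at htpos
    have hnum : 0 < δ * (2*κ*β - δ) := by
      by_contra h
      push_neg at h
      have : δ * (2*κ*β - δ) / (κ * s) ≤ 0 :=
        div_nonpos_of_nonpos_of_nonneg h (by positivity)
      linarith
    have : 0 < 2*κ*β - δ := by nlinarith
    rw [div_lt_iff₀ (by linarith)]
    linarith
  refine ⟨⟨β₀, ⟨hβ₀pos, (key β₀).mpr hβ₀⟩, ?_⟩, part2⟩
  rintro β ⟨hβpos, hβeq⟩
  have h1 : F β = c := (key β).mp hβeq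
  exact hmono.injOn (le_of_lt hβpos) (le_of_lt hβ₀pos) (h1.trans hβ₀.symm)
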